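/- Let α₂ > 0 and F(z) = −2α₂·∫₀^z D(y) dy, where D is Dawson's integral. Then |F(z)| / (α₂·log|z|) → 1 as |z| → ∞. -/

import Mathlib

open Filter

noncomputable section

/-- Dawson's integral `D(z) = exp(−z²)·∫₀^z exp(y²) dy`. -/
def dawson (z : ℝ) : ℝ := Real.exp (-z ^ 2) * ∫ y in (0:ℝ)..z, Real.exp (y ^ 2)

/-- `F(z) = −2α₂·∫₀^z D(y) dy`. -/
def Ffun (α₂ z : ℝ) : ℝ := -2 * α₂ * ∫ y in (0:ℝ)..z, dawson y

open intervalIntegral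

lemma contE : Continuous fun t : ℝ => Real.exp (t ^ 2) :=
  Real.continuous_exp.comp (continuous_pow 2)

lemma A_hasDerivAt (y : ℝ) :
    HasDerivAt (fun z : ℝ => ∫ t in (0:ℝ)..z, Real.exp (t ^ 2)) (Real.exp (y ^ 2)) y :=
  integral_hasDerivAt_right (contE.intervalIntegrable _ _)
    (contE.stronglyMeasurableAtFilter _ _) contE.continuousAt

lemma exp_linear_integral (c d a b : ℝ) (hc : c ≠ 0) :
    ∫ t in a..b, Real.exp (c * t + d) = (Real.exp (c * b + d) - Real.exp (c * a + d)) / c := by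
  have h : ∀ t ∈ Set.uIcc a b, HasDerivAt (fun t => Real.exp (c * t + d) / c)
      (Real.exp (c * t + d)) t := by
    intro t _
    have h1 : HasDerivAt (fun t : ℝ => c * t + d) c t := by
      simpa using ((hasDerivAt_id t).const_mul c).add_const d
    have := (h1.exp).div_const c
    simpa [mul_div_assoc, mul_comm, mul_div_cancel_left₀ _ hc] using this
  have := integral_eq_sub_of_hasDerivAt h
    ((Real.continuous_exp.comp (by continuity)).intervalIntegrable _ _)
  rw [this]; ring

/-- Lower bound: `(exp (y²) - exp (-y²)) / (2y) ≤ A y` for `y > 0`. -/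
lemma A_lower {y : ℝ} (hy : 0 < y) :
    (Real.exp (y ^ 2) - Real.exp (-y ^ 2)) / (2 * y) ≤ ∫ t in (0:ℝ)..y, Real.exp (t ^ 2) := by
  have key : ∫ t in (0:ℝ)..y, Real.exp (2 * y * t + (-y ^ 2)) ≤ ∫ t in (0:ℝ)..y, Real.exp (t ^ 2) := by
    apply integral_mono_on hy.le
    · exact ((Real.continuous_exp.comp (by continuity)).intervalIntegrable _ _)
    · exact contE.intervalIntegrable _ _
    · intro t _
      apply Real.exp_le_exp.2
      nlinarith [sq_nonneg (y - t)]
  rw [exp_linear_integral _ _ _ _ (by positivity)] at key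
  calc (Real.exp (y ^ 2) - Real.exp (-y ^ 2)) / (2 * y)
      = (Real.exp (2 * y * y + (-y ^ 2)) - Real.exp (2 * y * 0 + (-y ^ 2))) / (2 * y) := by
        ring_nf
    _ ≤ _ := key

/-- the majorant -/
def gmaj (y : ℝ) : ℝ := Real.exp (y ^ 2) * (1 / (2 * y) + 1 / y ^ 2)

lemma gmaj_hasDerivAt {y : ℝ} (hy : 0 < y) :
    HasDerivAt gmaj (Real.exp (y ^ 2) * (1 + 2 / y - 1 / (2 * y ^ 2) - 2 / y ^ 3)) y := by
  have h1 : HasDerivAt (fun y : ℝ => Real.exp (y ^ 2)) (Real.exp (y ^ 2) * (2 * y)) y := by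
    have := (hasDerivAt_pow 2 y).exp
    simpa [mul_comm] using this
  have h2 : HasDerivAt (fun y : ℝ => 1 / (2 * y) + 1 / y ^ 2)
      (-(1 / (2 * y ^ 2)) + -(2 / y ^ 3)) y := by
    have ha : HasDerivAt (fun y : ℝ => 1 / (2 * y)) (-(1 / (2 * y ^ 2))) y := by
      have := ((hasDerivAt_id y).const_mul (2:ℝ)).inv (by positivity)
      convert this using 1
      · rfl
      · rfl
      · ext z; simp [one_div]
      · simp only [id]; rw [neg_div, mul_pow]
        rw [neg_eq_iff_eq_neg, neg_neg, one_div, mul_inv]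
        field_simp
    have hb : HasDerivAt (fun y : ℝ => 1 / y ^ 2) (-(2 / y ^ 3)) y := by
      have := (hasDerivAt_pow 2 y).inv (by positivity)
      convert this using 1
      · rfl
      · rfl
      · ext z; simp [one_div]
      · field_simp; ring
    exact ha.add hb
  have := h1.mul h2
  have hne : y ≠ 0 := hy.ne'
  convert this using 1
  · rfl
  · rfl
  · rfl
  field_simp
  ring

lemma h_mono : MonotoneOn (fun y => gmaj y - ∫ t in (0:ℝ)..y, Real.exp (t ^ 2)) (Set.Ici (2:ℝ)) := by
  have hd : ∀ y ∈ Set.Ici (2:ℝ), 0 < y := fun y hy => lt_of_lt_of_le two_pos hy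
  apply monotoneOn_of_deriv_nonneg (convex_Ici 2)
  · apply ContinuousOn.sub
    · intro y hy
      exact ((gmaj_hasDerivAt (hd y hy)).continuousAt).continuousWithinAt
    · exact fun y hy => ((A_hasDerivAt y).continuousAt).continuousWithinAt
  · intro y hy
    rw [interior_Ici] at hy
    have hy0 : (0:ℝ) < y := lt_trans two_pos hy
    exact (((gmaj_hasDerivAt hy0).sub (A_hasDerivAt y)).differentiableAt).differentiableWithinAt
  · intro y hy
    rw [interior_Ici] at hy
    have hy2 : (2:ℝ) < y := hy
    have hy0 : (0:ℝ) < y := by linarith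
    have hda := (gmaj_hasDerivAt hy0).sub (A_hasDerivAt y)
    rw [show deriv (fun y => gmaj y - ∫ t in (0:ℝ)..y, Real.exp (t ^ 2)) y = _ from hda.deriv]
    have : Real.exp (y ^ 2) * (1 + 2 / y - 1 / (2 * y ^ 2) - 2 / y ^ 3) - Real.exp (y ^ 2)
        = Real.exp (y ^ 2) * (2 / y - 1 / (2 * y ^ 2) - 2 / y ^ 3) := by ring
    rw [this]
    have hfac : (0:ℝ) ≤ 2 / y - 1 / (2 * y ^ 2) - 2 / y ^ 3 := by
      have h1 : 1 / (2 * y ^ 2) ≤ 1 / (2 * y) := by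
        apply one_div_le_one_div_of_le (by positivity)
        nlinarith
      have h2 : 2 / y ^ 3 ≤ 2 / (2 * y) := by
        apply div_le_div_of_nonneg_left (by norm_num) (by positivity)
        nlinarith
      have h3 : 1 / (2 * y) + 2 / (2 * y) ≤ 2 / y := by
        rw [← add_div]
        rw [div_le_div_iff₀ (by positivity) (by positivity)]
        nlinarith
      linarith
    positivity

lemma dawson_continuous : Continuous dawson := by
  apply Continuous.mul
  · exact Real.continuous_exp.comp (by continuity)
  · exact continuous_iff_continuousAt.2 fun y => (A_hasDerivAt y).continuousAt

lemma A_upper {y : ℝ} (hy : 2 ≤ y) : (∫ t in (0:ℝ)..y, Real.exp (t ^ 2)) ≤ gmaj y := by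
  have h2 : (∫ t in (0:ℝ)..(2:ℝ), Real.exp (t ^ 2)) ≤ gmaj 2 := by
    have key : (∫ t in (0:ℝ)..(2:ℝ), Real.exp (t ^ 2))
        ≤ ∫ t in (0:ℝ)..(2:ℝ), Real.exp (2 * t + 0) := by
      apply integral_mono_on (by norm_num)
      · exact contE.intervalIntegrable _ _
      · exact ((Real.continuous_exp.comp (by continuity)).intervalIntegrable _ _)
      · intro t ht
        apply Real.exp_le_exp.2
        rcases ht with ⟨h0, h2⟩
        nlinarith
    rw [exp_linear_integral _ _ _ _ (by norm_num : (2:ℝ) ≠ 0)] at key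
    have : gmaj 2 = Real.exp 4 * (1 / 2) := by
      unfold gmaj; norm_num
    rw [this]
    have hpos : 0 < Real.exp (2 * 0 + 0) := Real.exp_pos _
    calc (∫ t in (0:ℝ)..(2:ℝ), Real.exp (t ^ 2))
        ≤ (Real.exp (2 * 2 + 0) - Real.exp (2 * 0 + 0)) / 2 := key
      _ ≤ Real.exp 4 * (1 / 2) := by
          rw [div_le_iff₀ (by norm_num : (0:ℝ) < 2)]
          norm_num
          linarith [Real.exp_pos (4:ℝ)]
  have := h_mono (Set.self_mem_Ici) (Set.mem_Ici.2 hy) hy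
  simp only at this
  linarith

lemma dawson_upper {y : ℝ} (hy : 2 ≤ y) : dawson y ≤ 1 / (2 * y) + 1 / y ^ 2 := by
  have hy0 : 0 < y := lt_of_lt_of_le two_pos hy
  have := mul_le_mul_of_nonneg_left (A_upper hy) (Real.exp_pos (-y ^ 2)).le
  calc dawson y ≤ Real.exp (-y ^ 2) * gmaj y := this
    _ = 1 / (2 * y) + 1 / y ^ 2 := by
        unfold gmaj
        rw [← mul_assoc, ← Real.exp_add]
        norm_num

lemma dawson_lower {y : ℝ} (hy : 2 ≤ y) : 1 / (2 * y) - Real.exp (-y) ≤ dawson y := by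
  have hy0 : 0 < y := lt_of_lt_of_le two_pos hy
  have := mul_le_mul_of_nonneg_left (A_lower hy0) (Real.exp_pos (-y ^ 2)).le
  have heq : Real.exp (-y ^ 2) * ((Real.exp (y ^ 2) - Real.exp (-y ^ 2)) / (2 * y))
      = 1 / (2 * y) - Real.exp (-(2 * y ^ 2)) / (2 * y) := by
    rw [← mul_div_assoc, mul_sub, ← Real.exp_add, ← Real.exp_add, sub_div]
    ring_nf
    rw [Real.exp_zero]
    ring
  have htail : Real.exp (-(2 * y ^ 2)) / (2 * y) ≤ Real.exp (-y) := by
    have h1 : Real.exp (-(2 * y ^ 2)) / (2 * y) ≤ Real.exp (-(2 * y ^ 2)) := by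
      apply div_le_self (Real.exp_pos _).le
      linarith
    have h2 : Real.exp (-(2 * y ^ 2)) ≤ Real.exp (-y) := by
      apply Real.exp_le_exp.2
      nlinarith
    linarith
  calc 1 / (2 * y) - Real.exp (-y) ≤ 1 / (2 * y) - Real.exp (-(2 * y ^ 2)) / (2 * y) := by
        linarith
    _ = Real.exp (-y ^ 2) * ((Real.exp (y ^ 2) - Real.exp (-y ^ 2)) / (2 * y)) := heq.symm
    _ ≤ dawson y := this

lemma integral_half_inv {z : ℝ} (hz : 2 ≤ z) :
    ∫ y in (2:ℝ)..z, 1 / (2 * y) = (Real.log z - Real.log 2) / 2 := by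
  have h : ∀ y : ℝ, 1 / (2 * y) = (1 / 2) * (1 / y) := fun y => by ring
  simp_rw [h]
  rw [integral_const_mul, integral_one_div_of_pos (by norm_num) (by linarith),
    Real.log_div (by linarith) (by norm_num)]
  ring

lemma integral_exp_neg {z : ℝ} (hz : 2 ≤ z) :
    ∫ y in (2:ℝ)..z, Real.exp (-y) = Real.exp (-2) - Real.exp (-z) := by
  have h : ∀ y : ℝ, Real.exp (-y) = Real.exp ((-1) * y + 0) := fun y => by norm_num
  simp_rw [h]
  rw [exp_linear_integral _ _ _ _ (by norm_num : (-1:ℝ) ≠ 0)]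
  norm_num
  ring

lemma integral_inv_sq' {z : ℝ} (hz : 2 ≤ z) :
    ∫ y in (2:ℝ)..z, 1 / y ^ 2 = 1 / 2 - 1 / z := by
  have huIcc : Set.uIcc (2:ℝ) z = Set.Icc 2 z := Set.uIcc_of_le (by linarith)
  have h : ∀ y ∈ Set.uIcc (2:ℝ) z, HasDerivAt (fun y : ℝ => -(1 / y)) (1 / y ^ 2) y := by
    intro y hy
    rw [huIcc] at hy
    have hy0 : y ≠ 0 := by rcases hy with ⟨h1, _⟩; positivity
    have := (hasDerivAt_inv hy0).neg
    simpa [one_div, Pi.neg_def] using this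
  have hint : IntervalIntegrable (fun y : ℝ => 1 / y ^ 2) MeasureTheory.volume 2 z := by
    apply ContinuousOn.intervalIntegrable
    intro y hy
    rw [huIcc] at hy
    have hy0 : y ≠ 0 := by rcases hy with ⟨h1, _⟩; positivity
    exact (continuousAt_const.div (continuousAt_pow y 2) (by positivity)).continuousWithinAt
  rw [integral_eq_sub_of_hasDerivAt h hint]
  ring

lemma dawson_intervalIntegrable (a b : ℝ) :
    IntervalIntegrable dawson MeasureTheory.volume a b :=
  dawson_continuous.intervalIntegrable _ _

lemma Gtail_bounds {z : ℝ} (hz : 2 ≤ z) :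
    |(∫ y in (2:ℝ)..z, dawson y) - (Real.log z - Real.log 2) / 2| ≤ 1 := by
  have hlow : (Real.log z - Real.log 2) / 2 - 1 ≤ ∫ y in (2:ℝ)..z, dawson y := by
    have key : ∫ y in (2:ℝ)..z, (1 / (2 * y) - Real.exp (-y))
        ≤ ∫ y in (2:ℝ)..z, dawson y := by
      apply integral_mono_on hz
      · apply ContinuousOn.intervalIntegrable
        rw [Set.uIcc_of_le hz]
        intro y hy
        have hy0 : y ≠ 0 := by rcases hy with ⟨h1, _⟩; positivity
        have c1 : ContinuousAt (fun u : ℝ => 1 / (2 * u)) y :=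
          continuousAt_const.div (continuousAt_const.mul continuousAt_id)
            (mul_ne_zero two_ne_zero hy0)
        have c2 : ContinuousAt (fun u : ℝ => Real.exp (-u)) y :=
          (Real.continuous_exp.comp continuous_neg).continuousAt
        exact (c1.sub c2).continuousWithinAt
      · exact dawson_intervalIntegrable _ _
      · intro y hy
        exact dawson_lower hy.1
    rw [integral_sub, integral_half_inv hz, integral_exp_neg hz] at key
    · have h1 : Real.exp (-2) - Real.exp (-z) ≤ 1 := by
        have := Real.exp_pos (-z)
        have h2 : Real.exp (-2) ≤ 1 := Real.exp_le_one_iff.2 (by norm_num)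
        linarith
      linarith
    · apply ContinuousOn.intervalIntegrable
      rw [Set.uIcc_of_le hz]
      intro y hy
      have hy0 : y ≠ 0 := by rcases hy with ⟨h1, _⟩; positivity
      exact (continuousAt_const.div (continuousAt_const.mul continuousAt_id)
        (by simpa using hy0)).continuousWithinAt
    · exact (Real.continuous_exp.comp continuous_neg).intervalIntegrable _ _
  have hup : (∫ y in (2:ℝ)..z, dawson y) ≤ (Real.log z - Real.log 2) / 2 + 1 := by
    have key : (∫ y in (2:ℝ)..z, dawson y)
        ≤ ∫ y in (2:ℝ)..z, (1 / (2 * y) + 1 / y ^ 2) := by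
      apply integral_mono_on hz
      · exact dawson_intervalIntegrable _ _
      · apply ContinuousOn.intervalIntegrable
        rw [Set.uIcc_of_le hz]
        intro y hy
        have hy0 : y ≠ 0 := by rcases hy with ⟨h1, _⟩; positivity
        exact ((continuousAt_const.div (continuousAt_const.mul continuousAt_id)
          (by simpa using hy0)).add (continuousAt_const.div (continuousAt_pow y 2)
          (by positivity))).continuousWithinAt
      · intro y hy
        exact dawson_upper hy.1
    rw [integral_add, integral_half_inv hz, integral_inv_sq' hz] at key
    · have hzinv : 0 < 1 / z := by positivity
      linarith
    · apply ContinuousOn.intervalIntegrable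
      rw [Set.uIcc_of_le hz]
      intro y hy
      have hy0 : y ≠ 0 := by rcases hy with ⟨h1, _⟩; positivity
      exact (continuousAt_const.div (continuousAt_const.mul continuousAt_id)
        (by simpa using hy0)).continuousWithinAt
    · apply ContinuousOn.intervalIntegrable
      rw [Set.uIcc_of_le hz]
      intro y hy
      have hy0 : y ≠ 0 := by rcases hy with ⟨h1, _⟩; positivity
      exact (continuousAt_const.div (continuousAt_pow y 2) (by positivity)).continuousWithinAt
  rw [abs_le]
  constructor <;> linarith

lemma Gkey {z : ℝ} (hz : 2 ≤ z) :
    |(∫ y in (0:ℝ)..z, dawson y) - Real.log z / 2|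
      ≤ |∫ y in (0:ℝ)..(2:ℝ), dawson y| + Real.log 2 / 2 + 1 := by
  have hsplit : (∫ y in (0:ℝ)..(2:ℝ), dawson y) + (∫ y in (2:ℝ)..z, dawson y)
      = ∫ y in (0:ℝ)..z, dawson y :=
    integral_add_adjacent_intervals (dawson_intervalIntegrable _ _)
      (dawson_intervalIntegrable _ _)
  have h1 := Gtail_bounds hz
  have h2 := abs_sub_abs_le_abs_sub ((∫ y in (2:ℝ)..z, dawson y) - (Real.log z - Real.log 2) / 2) 0
  rw [abs_le] at h1
  have hlog2 : (0:ℝ) ≤ Real.log 2 := Real.log_nonneg (by norm_num)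
  have habs : |(∫ y in (2:ℝ)..z, dawson y) - (Real.log z - Real.log 2) / 2| ≤ 1 :=
    Gtail_bounds hz
  have heq : (∫ y in (0:ℝ)..z, dawson y) - Real.log z / 2
      = (∫ y in (0:ℝ)..(2:ℝ), dawson y)
        + ((∫ y in (2:ℝ)..z, dawson y) - (Real.log z - Real.log 2) / 2)
        + (-(Real.log 2 / 2)) := by
    rw [← hsplit]; ring
  rw [heq]
  calc |_| ≤ |∫ y in (0:ℝ)..(2:ℝ), dawson y|
      + |(∫ y in (2:ℝ)..z, dawson y) - (Real.log z - Real.log 2) / 2|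
      + |(-(Real.log 2 / 2))| := abs_add_three _ _ _
    _ ≤ |∫ y in (0:ℝ)..(2:ℝ), dawson y| + Real.log 2 / 2 + 1 := by
        rw [abs_neg, abs_of_nonneg (by linarith : (0:ℝ) ≤ Real.log 2 / 2)]
        linarith

lemma dawson_odd (y : ℝ) : dawson (-y) = -dawson y := by
  unfold dawson
  have h := integral_comp_neg (a := (0:ℝ)) (b := y) (fun t => Real.exp (t ^ 2))
  simp only [neg_sq, neg_zero] at h
  have h2 : (∫ t in (0:ℝ)..(-y), Real.exp (t ^ 2)) = -∫ t in (0:ℝ)..y, Real.exp (t ^ 2) := by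
    rw [integral_symm 0 (-y)] at h
    linarith
  rw [h2]
  have hsq : (-y) ^ 2 = y ^ 2 := by ring
  rw [hsq]
  ring

lemma G_even (z : ℝ) : (∫ y in (0:ℝ)..(-z), dawson y) = ∫ y in (0:ℝ)..z, dawson y := by
  have h := integral_comp_neg (a := (0:ℝ)) (b := z) dawson
  simp only [dawson_odd, neg_zero] at h
  rw [integral_neg, integral_symm 0 (-z)] at h
  linarith

lemma main_top (α₂ : ℝ) (hα₂ : 0 < α₂) :
    Tendsto (fun z : ℝ => |Ffun α₂ z| / (α₂ * Real.log |z|)) atTop (nhds 1) := by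
  obtain ⟨C, hC0, hCbd⟩ : ∃ C : ℝ, 0 < C ∧ ∀ z : ℝ, 2 ≤ z →
      |(∫ y in (0:ℝ)..z, dawson y) - Real.log z / 2| ≤ C := by
    refine ⟨|∫ y in (0:ℝ)..(2:ℝ), dawson y| + Real.log 2 / 2 + 1, ?_, fun z hz => Gkey hz⟩
    have h1 := abs_nonneg (∫ y in (0:ℝ)..(2:ℝ), dawson y)
    have h2 : (0:ℝ) ≤ Real.log 2 := Real.log_nonneg (by norm_num)
    linarith
  have hzero : Tendsto (fun z : ℝ => 2 * C / Real.log z) atTop (nhds 0) :=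
    Tendsto.div_atTop tendsto_const_nhds Real.tendsto_log_atTop
  have hlo : Tendsto (fun z : ℝ => 1 - 2 * C / Real.log z) atTop (nhds 1) := by
    simpa using tendsto_const_nhds.sub hzero
  have hhi : Tendsto (fun z : ℝ => 1 + 2 * C / Real.log z) atTop (nhds 1) := by
    simpa using tendsto_const_nhds.add hzero
  have hev : ∀ᶠ z : ℝ in atTop, (3:ℝ) ≤ z ∧ Real.exp (2 * C + 1) ≤ z := by
    filter_upwards [eventually_ge_atTop (3:ℝ), eventually_ge_atTop (Real.exp (2 * C + 1))]
      with z h1 h2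
    exact ⟨h1, h2⟩
  have key : ∀ z : ℝ, 3 ≤ z → Real.exp (2 * C + 1) ≤ z →
      |Ffun α₂ z| / (α₂ * Real.log |z|) = 2 * (∫ y in (0:ℝ)..z, dawson y) / Real.log z ∧
      |2 * (∫ y in (0:ℝ)..z, dawson y) - Real.log z| ≤ 2 * C := by
    intro z h3 hez
    have hz0 : 0 < z := by linarith
    have hlogz : 2 * C + 1 ≤ Real.log z := (Real.le_log_iff_exp_le hz0).2 hez
    have hlogpos : 0 < Real.log z := by linarith
    have hG := hCbd z (by linarith)
    rw [abs_le] at hG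
    have hGpos : 0 < ∫ y in (0:ℝ)..z, dawson y := by
      have hg1 := hG.1
      linarith
    constructor
    · have habsz : |z| = z := abs_of_pos hz0
      rw [habsz]
      unfold Ffun
      rw [abs_of_nonpos (by nlinarith : -2 * α₂ * (∫ y in (0:ℝ)..z, dawson y) ≤ 0)]
      rw [div_eq_div_iff (by positivity) (by positivity)]
      ring
    · rw [abs_le]
      exact ⟨by linarith [hG.1], by linarith [hG.2]⟩
  apply tendsto_of_tendsto_of_tendsto_of_le_of_le' hlo hhi
  · filter_upwards [hev] with z hz
    obtain ⟨heq, hb⟩ := key z hz.1 hz.2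
    have hlogpos : 0 < Real.log z := by
      have h := (Real.le_log_iff_exp_le (show (0:ℝ) < z by linarith [hz.1])).2 hz.2
      linarith
    rw [heq, sub_le_iff_le_add, ← add_div, le_div_iff₀ hlogpos, one_mul]
    rw [abs_le] at hb
    linarith [hb.1]
  · filter_upwards [hev] with z hz
    obtain ⟨heq, hb⟩ := key z hz.1 hz.2
    have hlogpos : 0 < Real.log z := by
      have h := (Real.le_log_iff_exp_le (show (0:ℝ) < z by linarith [hz.1])).2 hz.2
      linarith
    rw [abs_le] at hb
    rw [heq]
    calc (2 * ∫ y in (0:ℝ)..z, dawson y) / Real.log z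
        ≤ (Real.log z + 2 * C) / Real.log z := by
          gcongr
          linarith [hb.2]
      _ = 1 + 2 * C / Real.log z := by
          rw [add_div, div_self hlogpos.ne']

/-- Proposition 4.2, first asymptotic: `|F(z)|/(α₂·log|z|) → 1` as `|z| → ∞`. -/
theorem Ffun_log_asymptotics (α₂ : ℝ) (hα₂ : 0 < α₂) :
    Tendsto (fun z : ℝ => |Ffun α₂ z| / (α₂ * Real.log |z|)) (cocompact ℝ) (nhds 1) := by
  rw [cocompact_eq_atBot_atTop, tendsto_sup]
  have hTop := main_top α₂ hα₂
  refine ⟨?_, hTop⟩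
  have hneg : ∀ z : ℝ, |Ffun α₂ (-z)| / (α₂ * Real.log |(-z)|)
      = |Ffun α₂ z| / (α₂ * Real.log |z|) := by
    intro z
    rw [abs_neg]
    congr 2
    unfold Ffun
    rw [G_even]
  have := hTop.comp tendsto_neg_atBot_atTop
  refine this.congr fun z => ?_
  exact hneg z
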